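/- arXiv:cs/0506069 — 4 statements merged into one kernel-verified Lean document; each statement's English description precedes it below -/
import Mathlib

section
/- For every integer k ≥ 3 and every real α > 0, the quantity ω_C(α,k) = sup_{t∈[0,1]} Ω(t,α,k) is strictly positive. (This is the exponent governing the expected #DPLL-UC search-tree size, showing the expected tree size is exponential at every clause-to-variable ratio.) -/
/-- Ω(t,α,k) = t + α·log₂(1 − (k/2^k)·t^{k−1} + ((k−1)/2^k)·t^k) -/
noncomputable def Omega (t α : ℝ) (k : ℕ) : ℝ :=
  t + α * Real.logb 2 (1 - ((k : ℝ) / 2 ^ k) * t ^ (k - 1) + (((k : ℝ) - 1) / 2 ^ k) * t ^ k)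

/-- ω_C(α,k) = sup_{t∈[0,1]} Ω(t,α,k) -/
noncomputable def omegaC (α : ℝ) (k : ℕ) : ℝ :=
  sSup ((fun t => Omega t α k) '' Set.Icc (0 : ℝ) 1)

lemma nat_ineq : ∀ k : ℕ, 3 ≤ k → 8 * k ≤ 3 * 2 ^ k := by
  intro k hk
  induction k with
  | zero => omega
  | succ n ih =>
    rcases Nat.lt_or_ge n 3 with h | h
    · interval_cases n <;> simp_all <;> omega
    · have := ih (by omega)
      have h8 : 8 ≤ 2 ^ n := by
        calc 8 = 2 ^ 3 := by norm_num
        _ ≤ 2 ^ n := Nat.pow_le_pow_right (by norm_num) h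
      simp [pow_succ]; omega

lemma k_div_le (k : ℕ) (hk : 3 ≤ k) : (k : ℝ) / 2 ^ k ≤ 3 / 8 := by
  rw [div_le_div_iff₀ (by positivity) (by norm_num)]
  have := nat_ineq k hk
  have : (8 * k : ℝ) ≤ 3 * 2 ^ k := by exact_mod_cast this
  push_cast
  linarith

lemma arg_bounds (k : ℕ) (hk : 3 ≤ k) {t : ℝ} (ht0 : 0 ≤ t) (ht1 : t ≤ 1) :
    5 / 8 ≤ 1 - ((k : ℝ) / 2 ^ k) * t ^ (k - 1) + (((k : ℝ) - 1) / 2 ^ k) * t ^ k ∧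
    1 - ((k : ℝ) / 2 ^ k) * t ^ (k - 1) + (((k : ℝ) - 1) / 2 ^ k) * t ^ k ≤ 1 ∧
    1 - t ^ 2 * (3 / 8) ≤
      1 - ((k : ℝ) / 2 ^ k) * t ^ (k - 1) + (((k : ℝ) - 1) / 2 ^ k) * t ^ k := by
  have hA : (k : ℝ) / 2 ^ k ≤ 3 / 8 := k_div_le k hk
  have hA0 : (0 : ℝ) ≤ (k : ℝ) / 2 ^ k := by positivity
  have hB0 : (0 : ℝ) ≤ ((k : ℝ) - 1) / 2 ^ k := by
    apply div_nonneg _ (by positivity)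
    have : (3 : ℝ) ≤ k := by exact_mod_cast hk
    linarith
  have htk1 : t ^ (k - 1) ≤ 1 := pow_le_one₀ ht0 ht1
  have htk1' : (0:ℝ) ≤ t ^ (k - 1) := pow_nonneg ht0 _
  have htkle : t ^ k ≤ t ^ (k - 1) := pow_le_pow_of_le_one ht0 ht1 (by omega)
  have htk2 : t ^ (k - 1) ≤ t ^ 2 := pow_le_pow_of_le_one ht0 ht1 (by omega)
  have hBA : ((k : ℝ) - 1) / 2 ^ k ≤ (k : ℝ) / 2 ^ k := by
    gcongr
    linarith
  have htk : t ^ k = t ^ (k - 1) * t := by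
    rw [← pow_succ]; congr 1; omega
  have hBt : ((k : ℝ) - 1) / 2 ^ k * t ≤ (k : ℝ) / 2 ^ k :=
    (mul_le_of_le_one_right hB0 ht1).trans hBA
  refine ⟨?_, ?_, ?_⟩
  · nlinarith [mul_le_mul hA htk1 htk1' (by norm_num : (0:ℝ) ≤ 3/8),
      mul_nonneg hB0 (pow_nonneg ht0 k)]
  · nlinarith [mul_le_mul hBt le_rfl htk1' hA0]
  · nlinarith [mul_le_mul hA htk2 htk1' (by norm_num : (0:ℝ) ≤ 3/8),
      mul_nonneg hB0 (pow_nonneg ht0 k)]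

theorem omegaC_pos (k : ℕ) (hk : 3 ≤ k) (α : ℝ) (hα : 0 < α) :
    0 < omegaC α k := by
  -- the argument of the logarithm, as a function of t
  set f : ℝ → ℝ := fun t =>
    1 - ((k : ℝ) / 2 ^ k) * t ^ (k - 1) + (((k : ℝ) - 1) / 2 ^ k) * t ^ k with hf
  have hfpos : ∀ t ∈ Set.Icc (0:ℝ) 1, 0 < f t := by
    intro t ht
    have := (arg_bounds k hk ht.1 ht.2).1
    simp only [hf]
    linarith
  -- continuity of Omega on the interval
  have hcont : ContinuousOn (fun t => Omega t α k) (Set.Icc (0:ℝ) 1) := by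
    have hfc : Continuous f := by
      simp only [hf]; continuity
    have : ∀ t, Omega t α k = t + α * (Real.log (f t) / Real.log 2) := by
      intro t; rfl
    simp only [this]
    apply ContinuousOn.add continuousOn_id
    apply ContinuousOn.mul continuousOn_const
    exact ((hfc.continuousOn.log (fun t ht => (hfpos t ht).ne')).div_const _)
  have hbdd : BddAbove ((fun t => Omega t α k) '' Set.Icc (0:ℝ) 1) :=
    (isCompact_Icc.image_of_continuousOn hcont).bddAbove
  -- choice of the witness point t₀
  set t₀ : ℝ := min 1 (1 / (2 * α)) with ht₀
  have ht₀0 : 0 < t₀ := lt_min one_pos (by positivity)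
  have ht₀1 : t₀ ≤ 1 := min_le_left _ _
  have hαt₀ : α * t₀ ≤ 1 / 2 := by
    have h2 : t₀ ≤ 1 / (2 * α) := min_le_right _ _
    rw [le_div_iff₀ (by positivity)] at h2
    linarith
  obtain ⟨h58, hle1, hquad⟩ := arg_bounds k hk ht₀0.le ht₀1
  set y : ℝ := f t₀ with hy
  have hOmegaEq : Omega t₀ α k = t₀ + α * Real.logb 2 y := rfl
  have hy0 : 0 < y := by simp only [hy, hf]; linarith
  have hy58 : 5 / 8 ≤ y := by simp only [hy, hf]; linarith
  have hy1' : y - 1 ≤ 0 := by simp only [hy, hf]; linarith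
  have hylb' : -(t₀ ^ 2 * (3 / 8)) ≤ y - 1 := by simp only [hy, hf]; linarith
  clear_value y
  clear hy h58 hle1 hquad hfpos hf
  clear_value t₀
  -- lower bound on log y
  have hlog1 : 1 - y⁻¹ ≤ Real.log y := Real.one_sub_inv_le_log_of_pos hy0
  have hyinv : y⁻¹ ≤ 8 / 5 := by
    rw [inv_le_comm₀ hy0 (by norm_num)]
    norm_num
    linarith
  have hy1 : y - 1 ≤ 0 := hy1'
  have hylb : -(t₀ ^ 2 * (3 / 8)) ≤ y - 1 := hylb'
  have hlog2 : -(3 / 5) * t₀ ^ 2 ≤ Real.log y := by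
    have h1 : 1 - y⁻¹ = (y - 1) * y⁻¹ := by
      field_simp
    have h2 : (y - 1) * (8 / 5) ≤ (y - 1) * y⁻¹ := by
      nlinarith [inv_pos.mpr hy0]
    nlinarith
  -- lower bound on logb
  have hL : (3/5 : ℝ) < Real.log 2 := by
    have := Real.log_two_gt_d9
    linarith
  have hlogb : -(t₀ ^ 2) ≤ Real.logb 2 y := by
    rw [Real.logb, le_div_iff₀ (by linarith : (0:ℝ) < Real.log 2)]
    nlinarith [sq_nonneg t₀]
  -- Omega t₀ is positive
  have hOmega : 0 < Omega t₀ α k := by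
    rw [hOmegaEq]
    have : α * (-(t₀ ^ 2)) ≤ α * Real.logb 2 y :=
      mul_le_mul_of_nonneg_left hlogb hα.le
    nlinarith
  have hmem : Omega t₀ α k ∈ (fun t => Omega t α k) '' Set.Icc (0:ℝ) 1 :=
    ⟨t₀, ⟨ht₀0.le, ht₀1⟩, rfl⟩
  exact lt_of_lt_of_le hOmega (le_csSup hbdd hmem)
end

section
/- For every integer k ≥ 3, the limit of α^{1/(k−2)}·ω_C(α,k) as α → ∞ equals ((k−2)/(k−1))·(2^k·ln 2/(k·(k−1)))^{1/(k−2)}. -/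
open Real Filter

lemma two_mul_le_two_pow' {k : ℕ} (hk : 3 ≤ k) : 2 * k ≤ 2 ^ k := by
  induction k with
  | zero => omega
  | succ n ih =>
    rcases Nat.lt_or_ge n 3 with h | h
    · interval_cases n <;> simp_all
    · have h1 := ih (by omega)
      have h2 : 2 ≤ 2 ^ n := Nat.one_lt_two_pow_iff.mpr (by omega)
      simp [pow_succ]; omega

lemma x_le_half {k : ℕ} (hk : 3 ≤ k) {t : ℝ} (ht0 : 0 ≤ t) (ht1 : t ≤ 1) :
    (k:ℝ)/2^k * t^(k-1) ≤ 1/2 := by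
  have h1 : (2:ℝ) * k ≤ 2^k := by exact_mod_cast two_mul_le_two_pow' hk
  have h2 : (0:ℝ) < 2^k := by positivity
  have h3 : t^(k-1) ≤ 1 := pow_le_one₀ ht0 ht1
  have h4 : (0:ℝ) ≤ (k:ℝ)/2^k := by positivity
  calc (k:ℝ)/2^k * t^(k-1) ≤ (k:ℝ)/2^k * 1 := mul_le_mul_of_nonneg_left h3 h4
    _ ≤ 1/2 := by rw [mul_one, div_le_div_iff₀ h2 (by norm_num)]; linarith

lemma F_lower {k : ℕ} (hk : 3 ≤ k) {t : ℝ} (ht0 : 0 ≤ t) :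
    1 - (k:ℝ)/2^k * t^(k-1) ≤
      1 - ((k : ℝ) / 2 ^ k) * t ^ (k - 1) + (((k : ℝ) - 1) / 2 ^ k) * t ^ k := by
  have hK : (3:ℝ) ≤ (k:ℝ) := by exact_mod_cast hk
  have h2k : (0:ℝ) < 2^k := by positivity
  have ht2 : (0:ℝ) ≤ t ^ k := by positivity
  have : (0:ℝ) ≤ (((k : ℝ) - 1) / 2 ^ k) * t ^ k := by
    apply mul_nonneg _ ht2
    apply div_nonneg (by linarith) h2k.le
  linarith

lemma F_pos {k : ℕ} (hk : 3 ≤ k) {t : ℝ} (ht0 : 0 ≤ t) (ht1 : t ≤ 1) :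
    0 < 1 - ((k : ℝ) / 2 ^ k) * t ^ (k - 1) + (((k : ℝ) - 1) / 2 ^ k) * t ^ k := by
  have h1 := x_le_half hk ht0 ht1
  have h2 := F_lower hk ht0 (k := k)
  linarith

lemma pow_k_eq {k : ℕ} (hk : 3 ≤ k) (t : ℝ) : t ^ k = t ^ (k-1) * t := by
  conv_lhs => rw [show k = (k-1) + 1 by omega]
  exact pow_succ t (k-1)

lemma F_sub_one {k : ℕ} (hk : 3 ≤ k) (t : ℝ) :
    1 - ((k : ℝ) / 2 ^ k) * t ^ (k - 1) + (((k : ℝ) - 1) / 2 ^ k) * t ^ k - 1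
      = -(t ^ (k-1) * ((k:ℝ) - ((k:ℝ)-1)*t)) / 2^k := by
  rw [pow_k_eq hk t]; ring

/-- Upper bound: Ω(t) ≤ t - (α/(2^k log 2)) t^{k-1} (K - (K-1)t). -/
lemma omega_upper {k : ℕ} (hk : 3 ≤ k) {t α : ℝ} (hα : 0 ≤ α) (ht0 : 0 ≤ t) (ht1 : t ≤ 1) :
    Omega t α k ≤ t - α / (2^k * Real.log 2) * (t ^ (k-1) * ((k:ℝ) - ((k:ℝ)-1)*t)) := by
  have hF := F_pos hk ht0 ht1
  have hlog := Real.log_le_sub_one_of_pos hF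
  rw [F_sub_one hk] at hlog
  have hl2 : (0:ℝ) < Real.log 2 := Real.log_pos one_lt_two
  have h2k : (0:ℝ) < 2^k := by positivity
  unfold Omega
  rw [Real.logb]
  have key : α * (Real.log (1 - ((k : ℝ) / 2 ^ k) * t ^ (k - 1) + (((k : ℝ) - 1) / 2 ^ k) * t ^ k) / Real.log 2)
      ≤ α * (-(t ^ (k-1) * ((k:ℝ) - ((k:ℝ)-1)*t)) / (2^k * Real.log 2)) := by
    apply mul_le_mul_of_nonneg_left _ hα
    rw [div_le_div_iff₀ hl2 (by positivity)]
    calc Real.log _ * (2^k * Real.log 2) = (Real.log _ * 2^k) * Real.log 2 := by ring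
      _ ≤ (-(t ^ (k-1) * ((k:ℝ) - ((k:ℝ)-1)*t)) / 2^k * 2^k) * Real.log 2 := by
          apply mul_le_mul_of_nonneg_right _ hl2.le
          exact mul_le_mul_of_nonneg_right hlog h2k.le
      _ = -(t ^ (k-1) * ((k:ℝ) - ((k:ℝ)-1)*t)) * Real.log 2 := by field_simp
  have : α * (-(t ^ (k-1) * ((k:ℝ) - ((k:ℝ)-1)*t)) / (2^k * Real.log 2))
      = -(α / (2^k * Real.log 2) * (t ^ (k-1) * ((k:ℝ) - ((k:ℝ)-1)*t))) := by ring
  rw [this] at key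
  linarith

/-- Ω(t) ≤ 1 for α ≥ 0, t ∈ [0,1]. -/
lemma omega_le_one {k : ℕ} (hk : 3 ≤ k) {t α : ℝ} (hα : 0 ≤ α) (ht0 : 0 ≤ t) (ht1 : t ≤ 1) :
    Omega t α k ≤ 1 := by
  have hK : (3:ℝ) ≤ (k:ℝ) := by exact_mod_cast hk
  have h2k : (0:ℝ) < 2^k := by positivity
  have htp : (0:ℝ) ≤ t^(k-1) := by positivity
  have hKt : ((k:ℝ)-1)*t ≤ (k:ℝ) := by nlinarith
  have h5 : ((k:ℝ)-1)*(t^(k-1)*t) ≤ (k:ℝ)*t^(k-1) := by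
    nlinarith [mul_le_mul_of_nonneg_left hKt htp]
  have hF1 : 1 - ((k : ℝ) / 2 ^ k) * t ^ (k - 1) + (((k : ℝ) - 1) / 2 ^ k) * t ^ k ≤ 1 := by
    rw [pow_k_eq hk t]
    have : ((k:ℝ)-1)/2^k * (t^(k-1)*t) ≤ (k:ℝ)/2^k * t^(k-1) := by
      rw [div_mul_eq_mul_div, div_mul_eq_mul_div, div_le_div_iff₀ h2k h2k]
      nlinarith [mul_le_mul_of_nonneg_right h5 h2k.le]
    linarith
  have hlog : Real.logb 2 (1 - ((k : ℝ) / 2 ^ k) * t ^ (k - 1) + (((k : ℝ) - 1) / 2 ^ k) * t ^ k) ≤ 0 :=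
    Real.logb_nonpos one_lt_two (F_pos hk ht0 ht1).le hF1
  have : α * Real.logb 2 (1 - ((k : ℝ) / 2 ^ k) * t ^ (k - 1) + (((k : ℝ) - 1) / 2 ^ k) * t ^ k) ≤ 0 :=
    mul_nonpos_of_nonneg_of_nonpos hα hlog
  unfold Omega; linarith

lemma log_one_sub_ge' {x : ℝ} (h1 : x ≤ 1/2) :
    -x - 2 * x ^ 2 ≤ Real.log (1 - x) := by
  have hx : (0:ℝ) < 1 - x := by linarith
  have h2 : Real.log (1 - x)⁻¹ ≤ (1 - x)⁻¹ - 1 :=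
    Real.log_le_sub_one_of_pos (by positivity)
  rw [Real.log_inv] at h2
  have hinv : (1 - x)⁻¹ ≤ 1 + x + 2 * x ^ 2 := by
    rw [inv_le_iff_one_le_mul₀ hx]
    nlinarith
  nlinarith

/-- Lower bound: Ω(t) ≥ t - (α/log 2)(x + 2x²) with x = (K/2^k) t^{k-1}. -/
lemma omega_lower {k : ℕ} (hk : 3 ≤ k) {t α : ℝ} (hα : 0 ≤ α) (ht0 : 0 ≤ t) (ht1 : t ≤ 1) :
    t - α / Real.log 2 * ((k:ℝ)/2^k * t^(k-1) + 2 * ((k:ℝ)/2^k * t^(k-1))^2)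
      ≤ Omega t α k := by
  set x : ℝ := (k:ℝ)/2^k * t^(k-1) with hxdef
  have h2k : (0:ℝ) < 2^k := by positivity
  have htp : (0:ℝ) ≤ t^(k-1) := by positivity
  have hx0 : 0 ≤ x := by rw [hxdef]; positivity
  have hxh : x ≤ 1/2 := x_le_half hk ht0 ht1
  have hF := F_lower hk ht0 (k := k) (t := t)
  have h1x : (0:ℝ) < 1 - x := by linarith
  have hlog1 : Real.log (1 - x) ≤
      Real.log (1 - ((k : ℝ) / 2 ^ k) * t ^ (k - 1) + (((k : ℝ) - 1) / 2 ^ k) * t ^ k) :=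
    Real.log_le_log h1x hF
  have hlog2 := log_one_sub_ge' hxh
  have hl2 : (0:ℝ) < Real.log 2 := Real.log_pos one_lt_two
  unfold Omega
  rw [Real.logb]
  have hmul : α * ((-x - 2*x^2) / Real.log 2) ≤
      α * (Real.log (1 - ((k : ℝ) / 2 ^ k) * t ^ (k - 1) + (((k : ℝ) - 1) / 2 ^ k) * t ^ k) / Real.log 2) := by
    apply mul_le_mul_of_nonneg_left _ hα
    rw [div_le_div_iff₀ hl2 hl2]
    have : -x - 2*x^2 ≤ Real.log (1 - ((k : ℝ) / 2 ^ k) * t ^ (k - 1) + (((k : ℝ) - 1) / 2 ^ k) * t ^ k) := by linarith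
    exact mul_le_mul_of_nonneg_right this hl2.le
  have heq : t - α / Real.log 2 * (x + 2*x^2) = t + α * ((-x - 2*x^2)/Real.log 2) := by ring
  rw [heq]
  linarith

/-- Young-type bound: for `c > 0`, `t ≥ 0`, `n ≥ 1`:
`t - c * t ^ (n+1) ≤ n/(n+1) * (c*(n+1))^(-1/n)`. -/
lemma young_bound {n : ℕ} (hn : 1 ≤ n) {c t : ℝ} (hc : 0 < c) (ht : 0 ≤ t) :
    t - c * t ^ (n + 1) ≤ (n : ℝ)/((n : ℝ)+1) * (c * ((n : ℝ)+1)) ^ (-(1:ℝ)/n) := by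
  set N : ℝ := (n : ℝ)
  have hN : (1:ℝ) ≤ N := Nat.one_le_cast.mpr hn
  set t₀ : ℝ := (c * (N+1)) ^ (-(1:ℝ)/N) with ht₀
  have hcN : 0 < c * (N+1) := by positivity
  have ht₀pos : 0 < t₀ := Real.rpow_pos_of_pos hcN _
  have hkey : c * (N+1) * t₀ ^ n = 1 := by
    rw [ht₀, ← Real.rpow_natCast ((c * (N+1)) ^ (-(1:ℝ)/N)) n, ← Real.rpow_mul hcN.le]
    rw [show -(1:ℝ)/N * n = -1 by field_simp; rfl]
    rw [Real.rpow_neg_one]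
    field_simp
  -- Bernoulli: (1 + a)^(n+1) ≥ 1 + (n+1) a with a = t/t₀ - 1
  have hb : 1 + ((n+1 : ℕ) : ℝ) * (t/t₀ - 1) ≤ (1 + (t/t₀ - 1)) ^ (n+1) := by
    apply one_add_mul_le_pow
    have : 0 ≤ t / t₀ := by positivity
    linarith
  rw [show 1 + (t/t₀ - 1) = t/t₀ by ring] at hb
  have hb' : 1 + (N+1) * (t/t₀ - 1) ≤ (t/t₀) ^ (n+1) := by
    push_cast at hb ⊢; linarith
  have hpow : (t/t₀) ^ (n+1) = t ^ (n+1) / t₀ ^ (n+1) := div_pow t t₀ (n+1)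
  rw [hpow] at hb'
  have ht₀pow : 0 < t₀ ^ (n+1) := pow_pos ht₀pos _
  have h3 : (1 + (N+1) * (t/t₀ - 1)) * t₀ ^ (n+1) ≤ t ^ (n+1) :=
    (le_div_iff₀ ht₀pow).mp hb'
  have hexp : t₀ ^ (n+1) = t₀ ^ n * t₀ := pow_succ t₀ n
  have h4 : c * ((1 + (N+1) * (t/t₀ - 1)) * (t₀ ^ n * t₀)) ≤ c * t ^ (n+1) := by
    rw [← hexp]; exact mul_le_mul_of_nonneg_left h3 hc.le
  have hct : c * t₀ ^ n = 1 / (N+1) := by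
    field_simp at hkey ⊢; linarith [hkey]
  have hNpos : (0:ℝ) < N + 1 := by linarith
  calc t - c * t ^ (n+1) ≤ t - c * ((1 + (N+1) * (t/t₀ - 1)) * (t₀ ^ n * t₀)) := by linarith
    _ = t - (c * t₀ ^ n) * ((1 + (N+1) * (t/t₀ - 1)) * t₀) := by ring
    _ = t - (1/(N+1)) * ((1 + (N+1) * (t/t₀ - 1)) * t₀) := by rw [hct]
    _ = N/(N+1) * t₀ := by field_simp; ring

set_option maxHeartbeats 2000000 in
theorem omegaC_asymptotic (k : ℕ) (hk : 3 ≤ k) :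
    Filter.Tendsto (fun α : ℝ => α ^ ((1 : ℝ) / ((k : ℝ) - 2)) * omegaC α k) Filter.atTop
      (nhds (((k : ℝ) - 2) / ((k : ℝ) - 1) *
        (2 ^ k * Real.log 2 / ((k : ℝ) * ((k : ℝ) - 1))) ^ ((1 : ℝ) / ((k : ℝ) - 2)))) := by
  set K : ℝ := (k : ℝ) with hKdef
  have hK : (3:ℝ) ≤ K := by rw [hKdef]; exact_mod_cast hk
  have hl2 : (0:ℝ) < Real.log 2 := Real.log_pos one_lt_two
  have h2k : (0:ℝ) < 2^k := by positivity
  have hK2 : (0:ℝ) < K - 2 := by linarith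
  have hK1 : (0:ℝ) < K - 1 := by linarith
  have hKpos : (0:ℝ) < K := by linarith
  set e : ℝ := (1:ℝ)/(K-2) with hedef
  have he : 0 < e := by positivity
  set A : ℝ := K/(2^k * Real.log 2) with hA
  have hApos : 0 < A := by positivity
  have hX : (0:ℝ) < 2^k * Real.log 2 / (K*(K-1)) := by positivity
  set c : ℝ := (2^k * Real.log 2 / (K*(K-1))) ^ e with hc
  have hcpos : 0 < c := Real.rpow_pos_of_pos hX e
  have hcast1 : ((k-1 : ℕ) : ℝ) = K - 1 := by
    rw [hKdef]; push_cast [Nat.cast_sub (by omega : 1 ≤ k)]; ring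
  have hcast2 : ((k-2 : ℕ) : ℝ) = K - 2 := by
    rw [hKdef]; push_cast [Nat.cast_sub (by omega : 2 ≤ k)]; ring
  have hckey : c ^ (k-2) = 2^k * Real.log 2/(K*(K-1)) := by
    rw [hc, ← Real.rpow_natCast ((2^k * Real.log 2 / (K*(K-1))) ^ e) (k-2),
      ← Real.rpow_mul hX.le, hcast2, show e * (K-2) = 1 by rw [hedef]; field_simp,
      Real.rpow_one]
  have hpow1 : c^(k-1) = c^(k-2)*c := by
    conv_lhs => rw [show k-1 = (k-2)+1 by omega]
    exact pow_succ _ _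
  set m : ℝ := K/2^k*c^(k-1) with hm
  have hmpos : 0 < m := by rw [hm]; positivity
  have hmlog : m/Real.log 2 = c/(K-1) := by
    rw [hm, hpow1, hckey]; field_simp
  have hLm : c - m/Real.log 2 = (K-2)/(K-1)*c := by
    rw [hmlog]; field_simp; ring
  set δ : ℝ := 1/(2*(K-1)) with hδdef
  have hδ : 0 < δ := by positivity
  set low : ℝ → ℝ := fun α => (K-2)/(K-1)*c - (2*m^2/Real.log 2) * α^(-((K-1)*e)) with hlow
  set up : ℝ → ℝ := fun α => (K-2)/(K-1) * (A*(1-α^(-δ))*(K-1)) ^ (-(1:ℝ)/(K-2)) with hup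
  -- limits of the bounding functions
  have hlow_tendsto : Tendsto low atTop (nhds ((K-2)/(K-1)*c)) := by
    have h0 : Tendsto (fun α:ℝ => α^(-((K-1)*e))) atTop (nhds 0) :=
      tendsto_rpow_neg_atTop (by positivity)
    have h1 := (tendsto_const_nhds (x := (K-2)/(K-1)*c) (f := atTop)).sub
      (h0.const_mul (2*m^2/Real.log 2))
    simp only [mul_zero, sub_zero] at h1
    exact h1
  have hAK1 : 0 < A*(K-1) := by positivity
  have hup_tendsto : Tendsto up atTop (nhds ((K-2)/(K-1)*c)) := by
    have h0 : Tendsto (fun α:ℝ => α^(-δ)) atTop (nhds 0) := tendsto_rpow_neg_atTop hδ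
    have h1 : Tendsto (fun α:ℝ => A*(1-α^(-δ))*(K-1)) atTop (nhds (A*(K-1))) := by
      have := ((tendsto_const_nhds (x := (1:ℝ)) (f := atTop)).sub h0).const_mul A
      have h2 := this.mul_const (K-1)
      simpa using h2
    have h3 : Tendsto (fun α:ℝ => (A*(1-α^(-δ))*(K-1)) ^ (-(1:ℝ)/(K-2))) atTop
        (nhds ((A*(K-1)) ^ (-(1:ℝ)/(K-2)))) :=
      (Real.continuousAt_rpow_const _ _ (Or.inl hAK1.ne')).tendsto.comp h1
    have h4 := h3.const_mul ((K-2)/(K-1))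
    have h5 : (A*(K-1)) ^ (-(1:ℝ)/(K-2)) = c := by
      have hAKi : A*(K-1) = (2^k * Real.log 2 / (K*(K-1)))⁻¹ := by
        rw [hA]; field_simp
      rw [hAKi, show (-(1:ℝ)/(K-2)) = -((1:ℝ)/(K-2)) by ring,
        Real.rpow_neg (inv_nonneg.mpr hX.le), Real.inv_rpow hX.le, inv_inv, hc]
    rw [h5] at h4
    exact h4
  -- eventual inequalities
  have hev : ∀ᶠ α : ℝ in atTop, low α ≤ α ^ ((1:ℝ)/(K-2)) * omegaC α k ∧
      α ^ ((1:ℝ)/(K-2)) * omegaC α k ≤ up α := by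
    have hev1 : ∀ᶠ α : ℝ in atTop, (1:ℝ) ≤ α := eventually_ge_atTop 1
    have hev2 : ∀ᶠ α : ℝ in atTop, α^(-δ) ≤ 1/2 := by
      have h0 : Tendsto (fun α:ℝ => α^(-δ)) atTop (nhds 0) := tendsto_rpow_neg_atTop hδ
      exact h0.eventually_le_const (by norm_num)
    have hev3 : ∀ᶠ α : ℝ in atTop, 2^k * Real.log 2 ≤ α^((1:ℝ)/2) :=
      (tendsto_rpow_atTop (by norm_num)).eventually_ge_atTop _
    have hev4 : ∀ᶠ α : ℝ in atTop, c^(k-2) ≤ α := eventually_ge_atTop _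
    filter_upwards [hev1, hev2, hev3, hev4] with α hα1 hαδ hα3 hα4
    have hα0 : (0:ℝ) < α := by linarith
    have hw0 : (0:ℝ) ≤ α ^ ((1:ℝ)/(K-2)) := Real.rpow_nonneg hα0.le _
    constructor
    · -- LOWER BOUND
      set w : ℝ := α ^ e with hw
      set v : ℝ := α ^ (-e) with hv
      set u : ℝ := α ^ (-((K-1)*e)) with hu
      have hv0 : 0 < v := Real.rpow_pos_of_pos hα0 _
      have hu0 : 0 < u := Real.rpow_pos_of_pos hα0 _
      have hw0' : 0 < w := Real.rpow_pos_of_pos hα0 _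
      have hwv : w * v = 1 := by
        rw [hw, hv, ← Real.rpow_add hα0]; simp
      have hwau : w * (α * u) = 1 := by
        rw [hw, hu, show α * α ^ (-((K-1)*e)) = α ^ (1 + -((K-1)*e)) by
          rw [Real.rpow_add hα0, Real.rpow_one], ← Real.rpow_add hα0,
          show e + (1 + -((K-1)*e)) = 0 by rw [hedef]; field_simp; ring, Real.rpow_zero]
      set T : ℝ := c * v with hT
      have hT0 : 0 < T := by positivity
      have hce : c ≤ w := by
        have h1 : ((c^(k-2) : ℝ)) ^ e ≤ α ^ e := Real.rpow_le_rpow (by positivity) hα4 he.le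
        rwa [← Real.rpow_natCast c (k-2), ← Real.rpow_mul hcpos.le, hcast2,
          show (K-2)*e = 1 by rw [hedef]; field_simp, Real.rpow_one] at h1
      have hT1 : T ≤ 1 := by
        calc T = c * v := hT
          _ ≤ w * v := mul_le_mul_of_nonneg_right hce hv0.le
          _ = 1 := hwv
      have hOl := omega_lower hk hα0.le hT0.le hT1
      rw [← hKdef] at hOl
      have hs : v ^ (k-1) = u := by
        rw [hv, hu, ← Real.rpow_natCast (α ^ (-e)) (k-1), ← Real.rpow_mul hα0.le, hcast1]
        congr 1; ring
      have hXval : K/2^k * T^(k-1) = m * u := by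
        rw [hT, mul_pow, hs, hm]; ring
      rw [hXval] at hOl
      have hbdd : BddAbove ((fun t => Omega t α k) '' Set.Icc (0:ℝ) 1) := by
        refine ⟨1, ?_⟩
        rintro y ⟨t, ⟨ht0, ht1⟩, rfl⟩
        exact omega_le_one hk hα0.le ht0 ht1
      have hmem : Omega T α k ∈ (fun t => Omega t α k) '' Set.Icc (0:ℝ) 1 :=
        ⟨T, ⟨hT0.le, hT1⟩, rfl⟩
      have hsup : Omega T α k ≤ omegaC α k := le_csSup hbdd hmem
      have hchain : w * (T - α/Real.log 2 * (m*u + 2*(m*u)^2)) ≤ w * omegaC α k :=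
        mul_le_mul_of_nonneg_left (le_trans hOl hsup) hw0'.le
      have heq : w * (T - α/Real.log 2 * (m*u + 2*(m*u)^2))
          = c - m/Real.log 2 - (2*m^2/Real.log 2)*u := by
        rw [hT]
        have hexp : w * (c*v - α/Real.log 2 * (m*u + 2*(m*u)^2))
            = c*(w*v) - (m/Real.log 2)*(w*(α*u)) - ((2*m^2/Real.log 2)*u)*(w*(α*u)) := by
          field_simp
          ring
        rw [hexp, hwv, hwau]; ring
      calc low α = c - m/Real.log 2 - (2*m^2/Real.log 2)*u := by
            rw [hlow, ← hLm, hu]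
        _ = w * (T - α/Real.log 2 * (m*u + 2*(m*u)^2)) := heq.symm
        _ ≤ w * omegaC α k := hchain
    · -- UPPER BOUND
      set ε : ℝ := α ^ (-δ) with hε
      have hε0 : 0 < ε := Real.rpow_pos_of_pos hα0 _
      set c' : ℝ := α*A*(1-ε) with hc'
      have hc'pos : 0 < c' := by
        rw [hc']; apply mul_pos (mul_pos hα0 hApos); linarith
      have hU0pos : 0 < (K-2)/(K-1) * (c'*(K-1)) ^ (-(1:ℝ)/(K-2)) := by
        apply mul_pos (by positivity)
        exact Real.rpow_pos_of_pos (by positivity) _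
      have hεpow : α * ε^(k-1) = α ^ ((1:ℝ)/2) := by
        rw [hε, ← Real.rpow_natCast (α^(-δ)) (k-1), ← Real.rpow_mul hα0.le, hcast1,
          show α * α ^ (-δ*(K-1)) = α ^ (1 + -δ*(K-1)) by
            rw [Real.rpow_add hα0, Real.rpow_one],
          show 1 + -δ*(K-1) = (1:ℝ)/2 by rw [hδdef]; field_simp; ring]
      have hptwise : ∀ t ∈ Set.Icc (0:ℝ) 1,
          Omega t α k ≤ (K-2)/(K-1) * (c'*(K-1)) ^ (-(1:ℝ)/(K-2)) := by
        rintro t ⟨ht0, ht1⟩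
        have hOu := omega_upper hk hα0.le ht0 ht1
        rw [← hKdef] at hOu
        have htp : (0:ℝ) ≤ t^(k-1) := by positivity
        by_cases htε : t ≤ ε
        · have hfac : K*(1-ε) ≤ K-(K-1)*t := by nlinarith
          have h3 : t^(k-1)*(K*(1-ε)) ≤ t^(k-1)*(K-(K-1)*t) :=
            mul_le_mul_of_nonneg_left hfac htp
          have h2 : c'*t^(k-1) ≤ α/(2^k*Real.log 2)*(t^(k-1)*(K-(K-1)*t)) := by
            calc c'*t^(k-1) = α/(2^k*Real.log 2)*(t^(k-1)*(K*(1-ε))) := by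
                  rw [hc', hA]; ring
              _ ≤ _ := mul_le_mul_of_nonneg_left h3 (by positivity)
          have hyoung := young_bound (n := k-2) (by omega) hc'pos ht0
          rw [show (k-2)+1 = k-1 by omega, hcast2, show (K-2)+1 = K-1 by ring] at hyoung
          calc Omega t α k ≤ t - c'*t^(k-1) := by linarith
            _ ≤ (K-2)/(K-1) * (c'*(K-1)) ^ (-(1:ℝ)/(K-2)) := hyoung
        · push_neg at htε
          have h5 : ε^(k-1)*1 ≤ t^(k-1)*(K-(K-1)*t) := by
            apply mul_le_mul (pow_le_pow_left₀ hε0.le htε.le _) (by nlinarith) (by norm_num) htp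
          have h6 : α/(2^k*Real.log 2)*(ε^(k-1)) ≤ α/(2^k*Real.log 2)*(t^(k-1)*(K-(K-1)*t)) := by
            have := mul_le_mul_of_nonneg_left h5
              (show (0:ℝ) ≤ α/(2^k*Real.log 2) by positivity)
            simpa using this
          have h7 : (1:ℝ) ≤ α/(2^k*Real.log 2)*ε^(k-1) := by
            rw [div_mul_eq_mul_div, le_div_iff₀ (by positivity)]
            calc 1 * (2^k*Real.log 2) = 2^k*Real.log 2 := by ring
              _ ≤ α^((1:ℝ)/2) := hα3
              _ = α * ε^(k-1) := hεpow.symm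
          calc Omega t α k ≤ t - α/(2^k*Real.log 2)*(t^(k-1)*(K-(K-1)*t)) := hOu
            _ ≤ t - α/(2^k*Real.log 2)*ε^(k-1) := by linarith
            _ ≤ 1 - 1 := by linarith
            _ ≤ (K-2)/(K-1) * (c'*(K-1)) ^ (-(1:ℝ)/(K-2)) := by linarith [hU0pos]
      have hne : ((fun t => Omega t α k) '' Set.Icc (0:ℝ) 1).Nonempty :=
        ⟨Omega 0 α k, 0, ⟨le_refl 0, zero_le_one⟩, rfl⟩
      have hsup : omegaC α k ≤ (K-2)/(K-1) * (c'*(K-1)) ^ (-(1:ℝ)/(K-2)) := by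
        apply csSup_le hne
        rintro y ⟨t, ht, rfl⟩
        exact hptwise t ht
      have hchain := mul_le_mul_of_nonneg_left hsup hw0
      have hcancel : α^e * α^(-((1:ℝ)/(K-2))) = 1 := by
        rw [← Real.rpow_add hα0, show e + -((1:ℝ)/(K-2)) = 0 by rw [hedef]; ring,
          Real.rpow_zero]
      have heq2 : α^e * ((K-2)/(K-1) * (c'*(K-1)) ^ (-(1:ℝ)/(K-2))) = up α := by
        simp only [hup]
        rw [← hε]
        rw [show c'*(K-1) = α*(A*(1-ε)*(K-1)) by rw [hc']; ring,
          show (-(1:ℝ)/(K-2)) = -((1:ℝ)/(K-2)) by ring,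
          Real.mul_rpow hα0.le (by nlinarith [hApos, hK1] : (0:ℝ) ≤ A*(1-ε)*(K-1))]
        calc α^e * ((K-2)/(K-1) * (α ^ (-((1:ℝ)/(K-2))) * (A*(1-ε)*(K-1)) ^ (-((1:ℝ)/(K-2)))))
            = (K-2)/(K-1) * (A*(1-ε)*(K-1)) ^ (-((1:ℝ)/(K-2)))
              * (α^e * α^(-((1:ℝ)/(K-2)))) := by ring
          _ = (K-2)/(K-1) * (A*(1-ε)*(K-1)) ^ (-((1:ℝ)/(K-2))) := by rw [hcancel]; ring
      rw [← heq2]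
      exact hchain
  exact tendsto_of_tendsto_of_tendsto_of_le_of_le' hlow_tendsto hup_tendsto
    (hev.mono fun α h => h.1) (hev.mono fun α h => h.2)
end

section
/- For all real numbers x₁, x₂, x₃, μ and all natural numbers C₁ ≥ 1, C₂, C₃, the following identity holds: Σ_{z₃=0}^{C₃} Σ_{w₂=0}^{z₃} Σ_{z₂=0}^{C₂} Σ_{w₁=0}^{z₂} Σ_{z₁=0}^{C₁−1} C(C₃,z₃)·(3μ)^{z₃}·(1−3μ)^{C₃−z₃} · C(z₃,w₂)·(1/2)^{z₃} · C(C₂,z₂)·(2μ)^{z₂}·(1−2μ)^{C₂−z₂} · C(z₂,w₁)·(1/2)^{z₂} · C(C₁−1,z₁)·μ^{z₁}·(1−μ)^{C₁−1−z₁} · (1/2)^{z₁} · x₁^{C₁−1−z₁+w₁} · x₂^{C₂−z₂+w₂} · x₃^{C₃−z₃} = f₁^{C₁−1} · f₂^{C₂} · f₃^{C₃}, where f₁ = x₁ + (μ/2)(1−2x₁), f₂ = x₂ + μ(x₁+1−2x₂), f₃ = x₃ + (3μ/2)(x₂+1−2x₃). (This is the generating-function identity for the unit-propagation transition kernel M_P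 of #DPLL-UC.) -/
open Finset

private lemma binom_sum (a b : ℝ) (n : ℕ) :
    ∑ k ∈ range (n + 1), (n.choose k : ℝ) * a ^ k * b ^ (n - k) = (a + b) ^ n := by
  rw [add_pow]
  exact sum_congr rfl fun k _ => by ring

private lemma binom_sum1 (x : ℝ) (n : ℕ) :
    ∑ w ∈ range (n + 1), (n.choose w : ℝ) * x ^ w = (x + 1) ^ n := by
  rw [← binom_sum x 1 n]
  exact sum_congr rfl fun k _ => by simp

open Finset in
/-- Generating-function identity for the unit-propagation transition kernel M_P of #DPLL-UC. -/
theorem unit_propagation_generating_function (x₁ x₂ x₃ μ : ℝ) (C₁ C₂ C₃ : ℕ) (hC₁ : 1 ≤ C₁) :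
    (∑ z₃ ∈ range (C₃ + 1), ∑ w₂ ∈ range (z₃ + 1),
     ∑ z₂ ∈ range (C₂ + 1), ∑ w₁ ∈ range (z₂ + 1),
     ∑ z₁ ∈ range (C₁ - 1 + 1),
       (C₃.choose z₃ : ℝ) * (3 * μ) ^ z₃ * (1 - 3 * μ) ^ (C₃ - z₃) *
       (z₃.choose w₂ : ℝ) * (1 / 2) ^ z₃ *
       (C₂.choose z₂ : ℝ) * (2 * μ) ^ z₂ * (1 - 2 * μ) ^ (C₂ - z₂) *
       (z₂.choose w₁ : ℝ) * (1 / 2) ^ z₂ *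
       ((C₁ - 1).choose z₁ : ℝ) * μ ^ z₁ * (1 - μ) ^ (C₁ - 1 - z₁) * (1 / 2) ^ z₁ *
       x₁ ^ (C₁ - 1 - z₁ + w₁) * x₂ ^ (C₂ - z₂ + w₂) * x₃ ^ (C₃ - z₃)) =
    (x₁ + (μ / 2) * (1 - 2 * x₁)) ^ (C₁ - 1) *
    (x₂ + μ * (x₁ + 1 - 2 * x₂)) ^ C₂ *
    (x₃ + (3 * μ / 2) * (x₂ + 1 - 2 * x₃)) ^ C₃ := by
  have h1 : (∑ z₁ ∈ range (C₁ - 1 + 1),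
      ((C₁ - 1).choose z₁ : ℝ) * μ ^ z₁ * (1 - μ) ^ (C₁ - 1 - z₁) * (1 / 2) ^ z₁ *
        x₁ ^ (C₁ - 1 - z₁)) = (x₁ + (μ / 2) * (1 - 2 * x₁)) ^ (C₁ - 1) := by
    have e : x₁ + (μ / 2) * (1 - 2 * x₁) = μ * (1 / 2) + (1 - μ) * x₁ := by ring
    rw [e, ← binom_sum (μ * (1 / 2)) ((1 - μ) * x₁) (C₁ - 1)]
    refine sum_congr rfl fun z _ => ?_
    rw [mul_pow μ (1 / 2) z, mul_pow (1 - μ) x₁]; ring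
  have h2 : (∑ z₂ ∈ range (C₂ + 1), ∑ w₁ ∈ range (z₂ + 1),
      (C₂.choose z₂ : ℝ) * (2 * μ) ^ z₂ * (1 - 2 * μ) ^ (C₂ - z₂) *
        (z₂.choose w₁ : ℝ) * (1 / 2) ^ z₂ * x₂ ^ (C₂ - z₂) * x₁ ^ w₁) =
      (x₂ + μ * (x₁ + 1 - 2 * x₂)) ^ C₂ := by
    have e : x₂ + μ * (x₁ + 1 - 2 * x₂) = μ * (x₁ + 1) + (1 - 2 * μ) * x₂ := by ring
    rw [e, ← binom_sum (μ * (x₁ + 1)) ((1 - 2 * μ) * x₂) C₂]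
    refine sum_congr rfl fun z _ => ?_
    have step : ∀ w, (C₂.choose z : ℝ) * (2 * μ) ^ z * (1 - 2 * μ) ^ (C₂ - z) *
        (z.choose w : ℝ) * (1 / 2) ^ z * x₂ ^ (C₂ - z) * x₁ ^ w =
        ((C₂.choose z : ℝ) * (2 * μ) ^ z * (1 - 2 * μ) ^ (C₂ - z) * (1 / 2) ^ z *
          x₂ ^ (C₂ - z)) * ((z.choose w : ℝ) * x₁ ^ w) := fun w => by ring
    rw [sum_congr rfl fun w _ => step w, ← mul_sum, binom_sum1]
    have hp : ((2 : ℝ) * μ) ^ z * (1 / 2) ^ z = μ ^ z := by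
      rw [← mul_pow]; congr 1; ring
    calc (C₂.choose z : ℝ) * (2 * μ) ^ z * (1 - 2 * μ) ^ (C₂ - z) * (1 / 2) ^ z *
          x₂ ^ (C₂ - z) * (x₁ + 1) ^ z
        = ((2 * μ) ^ z * (1 / 2) ^ z) * ((C₂.choose z : ℝ) * (x₁ + 1) ^ z *
            ((1 - 2 * μ) ^ (C₂ - z) * x₂ ^ (C₂ - z))) := by ring
      _ = (C₂.choose z : ℝ) * (μ * (x₁ + 1)) ^ z * ((1 - 2 * μ) * x₂) ^ (C₂ - z) := by
          rw [hp, mul_pow μ (x₁ + 1), mul_pow (1 - 2 * μ) x₂]; ring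
  have h3 : (∑ z₃ ∈ range (C₃ + 1), ∑ w₂ ∈ range (z₃ + 1),
      (C₃.choose z₃ : ℝ) * (3 * μ) ^ z₃ * (1 - 3 * μ) ^ (C₃ - z₃) *
        (z₃.choose w₂ : ℝ) * (1 / 2) ^ z₃ * x₃ ^ (C₃ - z₃) * x₂ ^ w₂) =
      (x₃ + (3 * μ / 2) * (x₂ + 1 - 2 * x₃)) ^ C₃ := by
    have e : x₃ + (3 * μ / 2) * (x₂ + 1 - 2 * x₃) =
        (3 * μ / 2) * (x₂ + 1) + (1 - 3 * μ) * x₃ := by ring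
    rw [e, ← binom_sum ((3 * μ / 2) * (x₂ + 1)) ((1 - 3 * μ) * x₃) C₃]
    refine sum_congr rfl fun z _ => ?_
    have step : ∀ w, (C₃.choose z : ℝ) * (3 * μ) ^ z * (1 - 3 * μ) ^ (C₃ - z) *
        (z.choose w : ℝ) * (1 / 2) ^ z * x₃ ^ (C₃ - z) * x₂ ^ w =
        ((C₃.choose z : ℝ) * (3 * μ) ^ z * (1 - 3 * μ) ^ (C₃ - z) * (1 / 2) ^ z *
          x₃ ^ (C₃ - z)) * ((z.choose w : ℝ) * x₂ ^ w) := fun w => by ring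
    rw [sum_congr rfl fun w _ => step w, ← mul_sum, binom_sum1]
    have hp : ((3 : ℝ) * μ) ^ z * (1 / 2) ^ z = (3 * μ / 2) ^ z := by
      rw [← mul_pow]; congr 1; ring
    calc (C₃.choose z : ℝ) * (3 * μ) ^ z * (1 - 3 * μ) ^ (C₃ - z) * (1 / 2) ^ z *
          x₃ ^ (C₃ - z) * (x₂ + 1) ^ z
        = ((3 * μ) ^ z * (1 / 2) ^ z) * ((C₃.choose z : ℝ) * (x₂ + 1) ^ z *
            ((1 - 3 * μ) ^ (C₃ - z) * x₃ ^ (C₃ - z))) := by ring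
      _ = (C₃.choose z : ℝ) * ((3 * μ / 2) * (x₂ + 1)) ^ z * ((1 - 3 * μ) * x₃) ^ (C₃ - z) := by
          rw [hp, mul_pow (3 * μ / 2) (x₂ + 1), mul_pow (1 - 3 * μ) x₃]; ring
  calc (∑ z₃ ∈ range (C₃ + 1), ∑ w₂ ∈ range (z₃ + 1),
     ∑ z₂ ∈ range (C₂ + 1), ∑ w₁ ∈ range (z₂ + 1),
     ∑ z₁ ∈ range (C₁ - 1 + 1),
       (C₃.choose z₃ : ℝ) * (3 * μ) ^ z₃ * (1 - 3 * μ) ^ (C₃ - z₃) *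
       (z₃.choose w₂ : ℝ) * (1 / 2) ^ z₃ *
       (C₂.choose z₂ : ℝ) * (2 * μ) ^ z₂ * (1 - 2 * μ) ^ (C₂ - z₂) *
       (z₂.choose w₁ : ℝ) * (1 / 2) ^ z₂ *
       ((C₁ - 1).choose z₁ : ℝ) * μ ^ z₁ * (1 - μ) ^ (C₁ - 1 - z₁) * (1 / 2) ^ z₁ *
       x₁ ^ (C₁ - 1 - z₁ + w₁) * x₂ ^ (C₂ - z₂ + w₂) * x₃ ^ (C₃ - z₃))
      = ∑ z₃ ∈ range (C₃ + 1), ∑ w₂ ∈ range (z₃ + 1),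
          ((C₃.choose z₃ : ℝ) * (3 * μ) ^ z₃ * (1 - 3 * μ) ^ (C₃ - z₃) *
            (z₃.choose w₂ : ℝ) * (1 / 2) ^ z₃ * x₃ ^ (C₃ - z₃) * x₂ ^ w₂) *
          ((∑ z₂ ∈ range (C₂ + 1), ∑ w₁ ∈ range (z₂ + 1),
              (C₂.choose z₂ : ℝ) * (2 * μ) ^ z₂ * (1 - 2 * μ) ^ (C₂ - z₂) *
                (z₂.choose w₁ : ℝ) * (1 / 2) ^ z₂ * x₂ ^ (C₂ - z₂) * x₁ ^ w₁) *
           (∑ z₁ ∈ range (C₁ - 1 + 1),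
              ((C₁ - 1).choose z₁ : ℝ) * μ ^ z₁ * (1 - μ) ^ (C₁ - 1 - z₁) * (1 / 2) ^ z₁ *
                x₁ ^ (C₁ - 1 - z₁))) := by
        refine sum_congr rfl fun z₃ _ => sum_congr rfl fun w₂ _ => ?_
        trans ∑ z₂ ∈ range (C₂ + 1), ∑ w₁ ∈ range (z₂ + 1),
            (((C₃.choose z₃ : ℝ) * (3 * μ) ^ z₃ * (1 - 3 * μ) ^ (C₃ - z₃) *
                (z₃.choose w₂ : ℝ) * (1 / 2) ^ z₃ * x₃ ^ (C₃ - z₃) * x₂ ^ w₂) *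
              ((C₂.choose z₂ : ℝ) * (2 * μ) ^ z₂ * (1 - 2 * μ) ^ (C₂ - z₂) *
                (z₂.choose w₁ : ℝ) * (1 / 2) ^ z₂ * x₂ ^ (C₂ - z₂) * x₁ ^ w₁)) *
            (∑ z₁ ∈ range (C₁ - 1 + 1),
              ((C₁ - 1).choose z₁ : ℝ) * μ ^ z₁ * (1 - μ) ^ (C₁ - 1 - z₁) * (1 / 2) ^ z₁ *
                x₁ ^ (C₁ - 1 - z₁))
        · refine sum_congr rfl fun z₂ _ => sum_congr rfl fun w₁ _ => ?_
          rw [mul_sum]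
          refine sum_congr rfl fun z₁ _ => ?_
          rw [pow_add, pow_add]; ring
        · simp only [← sum_mul]
          rw [← mul_assoc]
          congr 1
          rw [mul_sum]
          exact sum_congr rfl fun z₂ _ => by rw [mul_sum]
    _ = (∑ z₃ ∈ range (C₃ + 1), ∑ w₂ ∈ range (z₃ + 1),
          (C₃.choose z₃ : ℝ) * (3 * μ) ^ z₃ * (1 - 3 * μ) ^ (C₃ - z₃) *
            (z₃.choose w₂ : ℝ) * (1 / 2) ^ z₃ * x₃ ^ (C₃ - z₃) * x₂ ^ w₂) *
        ((∑ z₂ ∈ range (C₂ + 1), ∑ w₁ ∈ range (z₂ + 1),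
            (C₂.choose z₂ : ℝ) * (2 * μ) ^ z₂ * (1 - 2 * μ) ^ (C₂ - z₂) *
              (z₂.choose w₁ : ℝ) * (1 / 2) ^ z₂ * x₂ ^ (C₂ - z₂) * x₁ ^ w₁) *
         (∑ z₁ ∈ range (C₁ - 1 + 1),
            ((C₁ - 1).choose z₁ : ℝ) * μ ^ z₁ * (1 - μ) ^ (C₁ - 1 - z₁) * (1 / 2) ^ z₁ *
              x₁ ^ (C₁ - 1 - z₁))) := by
        symm
        rw [sum_mul]
        exact sum_congr rfl fun z₃ _ => by rw [sum_mul]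
    _ = (x₁ + (μ / 2) * (1 - 2 * x₁)) ^ (C₁ - 1) *
        (x₂ + μ * (x₁ + 1 - 2 * x₂)) ^ C₂ *
        (x₃ + (3 * μ / 2) * (x₂ + 1 - 2 * x₃)) ^ C₃ := by
        rw [h1, h2, h3]; ring
end

section
/- Let N ≥ 1 and M ≥ 0 be integers and let (G_T)_{0 ≤ T ≤ N} be the family of functions defined by the #DPLL-UC generating-function recurrence with initial condition G_0(x₁,x₂,x₃) = x₃^M. Then for every T with 0 ≤ T ≤ N, the conservation identity 2^{N−T}·G_T(1/2, 3/4, 7/8) + Σ_{H=0}^{T−1} 2^{N−H}·G_H(0,0,0) = 2^N·(7/8)^M holds. (The point (1/2, 3/4, 7/8) is a fixed point of the coefficient maps f₁, f₂, f₃ at every height, and the identity expresses exact conservation of the expected number of satisfying assignments.) -/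
/-- The #DPLL-UC generating functions G_T for N variables and M clauses:
G_0(x₁,x₂,x₃) = x₃^M and, with μ = 1/(N−T),
G_{T+1}(x₁,x₂,x₃) = (1/f₁)·G_T(f₁,f₂,f₃) + (2 − 1/f₁)·G_T(0,f₂,f₃) − 2·G_T(0,0,0),
where f₁ = x₁ + (μ/2)(1−2x₁), f₂ = x₂ + μ(x₁+1−2x₂), f₃ = x₃ + (3μ/2)(x₂+1−2x₃). -/
noncomputable def G (N M : ℕ) : ℕ → ℝ → ℝ → ℝ → ℝ
  | 0 => fun _ _ x₃ => x₃ ^ M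
  | T + 1 => fun x₁ x₂ x₃ =>
      let μ : ℝ := 1 / ((N : ℝ) - (T : ℝ))
      let f₁ : ℝ := x₁ + (μ / 2) * (1 - 2 * x₁)
      let f₂ : ℝ := x₂ + μ * (x₁ + 1 - 2 * x₂)
      let f₃ : ℝ := x₃ + (3 * μ / 2) * (x₂ + 1 - 2 * x₃)
      (1 / f₁) * G N M T f₁ f₂ f₃ + (2 - 1 / f₁) * G N M T 0 f₂ f₃ - 2 * G N M T 0 0 0

/-- Conservation of the expected number of satisfying assignments along #DPLL-UC. -/
theorem conservation_identity (N M : ℕ) (hN : 1 ≤ N) (T : ℕ) (hT : T ≤ N) :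
    2 ^ (N - T) * G N M T (1 / 2) (3 / 4) (7 / 8) +
      ∑ H ∈ Finset.range T, 2 ^ (N - H) * G N M H 0 0 0 =
    2 ^ N * (7 / 8 : ℝ) ^ M := by
  induction T with
  | zero => simp [G]
  | succ T ih =>
    have ih' := ih (Nat.le_of_succ_le hT)
    rw [Finset.sum_range_succ]
    have hG : G N M (T + 1) (1 / 2) (3 / 4) (7 / 8)
        = 2 * G N M T (1 / 2) (3 / 4) (7 / 8) - 2 * G N M T 0 0 0 := by
      show (1 / ((1:ℝ)/2 + _)) * _ + _ - _ = _
      norm_num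
    rw [hG]
    have hpow : (2 : ℝ) ^ (N - (T + 1)) * 2 = 2 ^ (N - T) := by
      rw [← pow_succ]
      congr 1
      omega
    linear_combination ih' +
      (G N M T (1 / 2) (3 / 4) (7 / 8) - G N M T 0 0 0) * hpow
end
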